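/- arXiv:2108.06634 — 3 statements merged into one kernel-verified Lean document; each statement's English description precedes it below -/
import Mathlib

section
/- Let m be an even positive integer and let c_1 ≥ c_2 ≥ ... ≥ c_m ≥ 0 be real numbers with ∑_{i=1}^m c_i^2 = 1. Define K = 2·(c_1c_2 + c_3c_4 + ... + c_{m-1}c_m) = 2·∑_{j=1}^{m/2} c_{2j-1}c_{2j}, the Bell value B = 2·√(1 + K^2), and the concurrence C = 2·√(∑_{1 ≤ i < j ≤ m} c_i^2 c_j^2). Then B ≤ 2·√(1 + C^2). -/
open Finset

private lemma pairsum_aux (h : ℕ → ℝ) : ∀ n : ℕ,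
    ∑ i ∈ Icc 1 (2 * n), h i = ∑ j ∈ Icc 1 n, (h (2 * j - 1) + h (2 * j))
  | 0 => by simp
  | (n + 1) => by
    have e : 2 * (n + 1) = 2 * n + 1 + 1 := by omega
    rw [e, Finset.sum_Icc_succ_top (by omega), Finset.sum_Icc_succ_top (by omega),
      pairsum_aux h n, Finset.sum_Icc_succ_top (by omega : (1 : ℕ) ≤ n + 1)]
    have e1 : 2 * (n + 1) - 1 = 2 * n + 1 := by omega
    have e2 : 2 * (n + 1) = 2 * n + 1 + 1 := by omega
    rw [e1, e2]
    ring

private lemma key_aux (f : ℕ → ℝ) (hf : ∀ i, 0 ≤ f i) : ∀ n : ℕ,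
    (∑ j ∈ Icc 1 n, f (2 * j - 1) * f (2 * j)) ^ 2 ≤
      ∑ i ∈ Icc 1 (2 * n), ∑ j ∈ Icc (i + 1) (2 * n), f i ^ 2 * f j ^ 2
  | 0 => by simp
  | (n + 1) => by
    set A := ∑ j ∈ Icc 1 n, f (2 * j - 1) * f (2 * j) with hA
    set p := f (2 * n + 1) with hp
    set q := f (2 * n + 2) with hq
    have ih := key_aux f hf n
    -- rewrite LHS
    have hL : ∑ j ∈ Icc 1 (n + 1), f (2 * j - 1) * f (2 * j) = A + p * q := by
      rw [Finset.sum_Icc_succ_top (by omega : (1 : ℕ) ≤ n + 1)]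
      have e1 : 2 * (n + 1) - 1 = 2 * n + 1 := by omega
      have e2 : 2 * (n + 1) = 2 * n + 2 := by omega
      rw [e1, e2]
    -- rewrite RHS
    have hR : ∑ i ∈ Icc 1 (2 * (n + 1)), ∑ j ∈ Icc (i + 1) (2 * (n + 1)), f i ^ 2 * f j ^ 2
        = (∑ i ∈ Icc 1 (2 * n), ∑ j ∈ Icc (i + 1) (2 * n), f i ^ 2 * f j ^ 2)
          + (∑ i ∈ Icc 1 (2 * n), f i ^ 2 * (p ^ 2 + q ^ 2)) + p ^ 2 * q ^ 2 := by
      have e : 2 * (n + 1) = 2 * n + 1 + 1 := by omega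
      rw [e, Finset.sum_Icc_succ_top (by omega : (1 : ℕ) ≤ 2 * n + 1 + 1),
        Finset.sum_Icc_succ_top (by omega : (1 : ℕ) ≤ 2 * n + 1)]
      have h1 : ∑ j ∈ Icc (2 * n + 1 + 1 + 1) (2 * n + 1 + 1), f (2 * n + 1 + 1) ^ 2 * f j ^ 2 = 0 := by
        rw [Finset.Icc_eq_empty (by omega)]; simp
      have h2 : ∑ j ∈ Icc (2 * n + 1 + 1) (2 * n + 1 + 1), f (2 * n + 1) ^ 2 * f j ^ 2
          = p ^ 2 * q ^ 2 := by
        rw [Finset.Icc_self, Finset.sum_singleton]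
      rw [h1, h2]
      have h3 : ∀ i ∈ Icc 1 (2 * n),
          ∑ j ∈ Icc (i + 1) (2 * n + 1 + 1), f i ^ 2 * f j ^ 2
          = (∑ j ∈ Icc (i + 1) (2 * n), f i ^ 2 * f j ^ 2) + f i ^ 2 * (p ^ 2 + q ^ 2) := by
        intro i hi
        simp only [Finset.mem_Icc] at hi
        rw [Finset.sum_Icc_succ_top (by omega : i + 1 ≤ 2 * n + 1 + 1),
          Finset.sum_Icc_succ_top (by omega : i + 1 ≤ 2 * n + 1)]
        have : 2 * n + 1 + 1 = 2 * n + 2 := by omega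
        rw [this]
        ring
      rw [Finset.sum_congr rfl h3, Finset.sum_add_distrib]
      ring
    rw [hL, hR]
    -- need: (A + p*q)^2 ≤ RHS
    have hcross : 2 * A * (p * q) ≤ ∑ i ∈ Icc 1 (2 * n), f i ^ 2 * (p ^ 2 + q ^ 2) := by
      rw [pairsum_aux (fun i => f i ^ 2 * (p ^ 2 + q ^ 2)) n]
      have : 2 * A * (p * q) = ∑ j ∈ Icc 1 n, f (2 * j - 1) * f (2 * j) * (2 * (p * q)) := by
        rw [hA, Finset.mul_sum, Finset.sum_mul]
        exact Finset.sum_congr rfl fun j _ => by ring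
      rw [this]
      refine Finset.sum_le_sum fun j hj => ?_
      have h1 := hf (2 * j - 1)
      have h2 := hf (2 * j)
      have h3 := hf (2 * n + 1)
      have h4 := hf (2 * n + 2)
      nlinarith [sq_nonneg (f (2 * j - 1) * q - f (2 * j) * p),
        sq_nonneg (f (2 * j - 1) * p - f (2 * j) * q),
        mul_nonneg (mul_nonneg h1 h2) (mul_nonneg h3 h4)]
    nlinarith [ih]

/-- **Theorem 1 (upper bound).** For an even positive integer `m` and nonincreasing
nonnegative Schmidt coefficients `c 1 ≥ c 2 ≥ ⋯ ≥ c m ≥ 0` with `∑ cᵢ² = 1`,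
setting `K = 2 ∑_{j=1}^{m/2} c_{2j-1} c_{2j}`, the Bell value `B = 2√(1 + K²)`
and the concurrence `C = 2√(∑_{i<j} cᵢ² cⱼ²)` satisfy `B ≤ 2√(1 + C²)`. -/
theorem bell_upper_bound_even (m : ℕ) (hm : Even m) (hm0 : 0 < m)
    (c : ℕ → ℝ)
    (hnonneg : ∀ i, 1 ≤ i → i ≤ m → 0 ≤ c i)
    (hmono : ∀ i, 1 ≤ i → i < m → c (i + 1) ≤ c i)
    (hnorm : ∑ i ∈ Finset.Icc 1 m, (c i) ^ 2 = 1)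
    (K B C : ℝ)
    (hK : K = 2 * ∑ j ∈ Finset.Icc 1 (m / 2), c (2 * j - 1) * c (2 * j))
    (hB : B = 2 * Real.sqrt (1 + K ^ 2))
    (hC : C = 2 * Real.sqrt (∑ i ∈ Finset.Icc 1 m,
      ∑ j ∈ Finset.Icc (i + 1) m, (c i) ^ 2 * (c j) ^ 2)) :
    B ≤ 2 * Real.sqrt (1 + C ^ 2) := by
  obtain ⟨k, hk⟩ := hm
  have hmk : m = 2 * k := by omega
  have hn : m / 2 = k := by omega
  set f : ℕ → ℝ := fun i => |c i| with hfdef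
  have hf : ∀ i, 0 ≤ f i := fun i => abs_nonneg _
  have hA : ∑ j ∈ Icc 1 k, f (2 * j - 1) * f (2 * j)
      = ∑ j ∈ Finset.Icc 1 (m / 2), c (2 * j - 1) * c (2 * j) := by
    rw [hn]
    refine Finset.sum_congr rfl fun j hj => ?_
    simp only [Finset.mem_Icc] at hj
    simp only [hfdef]
    rw [abs_of_nonneg (hnonneg _ (by omega) (by omega)),
      abs_of_nonneg (hnonneg _ (by omega) (by omega))]
  have hT : ∑ i ∈ Icc 1 (2 * k), ∑ j ∈ Icc (i + 1) (2 * k), f i ^ 2 * f j ^ 2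
      = ∑ i ∈ Finset.Icc 1 m, ∑ j ∈ Finset.Icc (i + 1) m, (c i) ^ 2 * (c j) ^ 2 := by
    rw [← hmk]
    exact Finset.sum_congr rfl fun i _ => Finset.sum_congr rfl fun j _ => by
      simp only [hfdef, sq_abs]
  have hkey := key_aux f hf k
  rw [hA, hT] at hkey
  have hT0 : 0 ≤ ∑ i ∈ Finset.Icc 1 m, ∑ j ∈ Finset.Icc (i + 1) m, (c i) ^ 2 * (c j) ^ 2 :=
    Finset.sum_nonneg fun i _ => Finset.sum_nonneg fun j _ =>
      mul_nonneg (sq_nonneg _) (sq_nonneg _)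
  have hC2 : C ^ 2 = 4 * ∑ i ∈ Finset.Icc 1 m, ∑ j ∈ Finset.Icc (i + 1) m,
      (c i) ^ 2 * (c j) ^ 2 := by
    rw [hC, mul_pow, Real.sq_sqrt hT0]; ring
  have hK2 : K ^ 2 ≤ C ^ 2 := by
    rw [hK, hC2]; nlinarith [hkey]
  have hs : Real.sqrt (1 + K ^ 2) ≤ Real.sqrt (1 + C ^ 2) :=
    Real.sqrt_le_sqrt (by linarith)
  rw [hB]; linarith
end

section
/- Let m be an even positive integer and let c_1 ≥ c_2 ≥ ... ≥ c_m ≥ 0 be real numbers with ∑_{i=1}^m c_i^2 = 1. Define K = 2·∑_{j=1}^{m/2} c_{2j-1}c_{2j}, the Bell value B = 2·√(1 + K^2), and the concurrence C = 2·√(∑_{1 ≤ i < j ≤ m} c_i^2 c_j^2). Then B ≥ √(2·(1 + C^2)). -/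
open Finset

lemma pair_sum' (f : ℕ → ℝ) : ∀ n : ℕ,
    ∑ i ∈ Icc 1 (2*n), f i = ∑ t ∈ Icc 1 n, (f (2*t-1) + f (2*t)) := by
  intro n
  induction n with
  | zero => simp
  | succ n ih =>
    have h1 : 2 * (n+1) = (2*n+1) + 1 := by ring
    have hL : ∑ i ∈ Icc 1 (2*(n+1)), f i
        = (∑ i ∈ Icc 1 (2*n), f i) + f (2*n+1) + f (2*n+2) := by
      rw [h1, Finset.sum_Icc_succ_top (by omega), Finset.sum_Icc_succ_top (by omega)]
    have hR : ∑ t ∈ Icc 1 (n+1), (f (2*t-1) + f (2*t))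
        = (∑ t ∈ Icc 1 n, (f (2*t-1) + f (2*t))) + (f (2*(n+1)-1) + f (2*(n+1))) :=
      Finset.sum_Icc_succ_top (by omega) _
    have h2 : 2*(n+1)-1 = 2*n+1 := by omega
    have h3 : 2*(n+1) = 2*n+2 := by ring
    rw [hL, hR, ih, h2, h3]
    ring

lemma sq_expand' (x : ℕ → ℝ) : ∀ M : ℕ,
    (∑ i ∈ Icc 1 M, x i)^2
      = ∑ i ∈ Icc 1 M, (x i)^2 + 2 * ∑ i ∈ Icc 1 M, ∑ j ∈ Icc (i+1) M, x i * x j := by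
  intro M
  induction M with
  | zero => simp
  | succ M ih =>
    have hA : ∑ i ∈ Icc 1 (M+1), x i = (∑ i ∈ Icc 1 M, x i) + x (M+1) :=
      Finset.sum_Icc_succ_top (by omega) x
    have hQ : ∑ i ∈ Icc 1 (M+1), (x i)^2 = (∑ i ∈ Icc 1 M, (x i)^2) + (x (M+1))^2 :=
      Finset.sum_Icc_succ_top (by omega) _
    have hD : ∑ i ∈ Icc 1 (M+1), ∑ j ∈ Icc (i+1) (M+1), x i * x j
        = (∑ i ∈ Icc 1 M, ∑ j ∈ Icc (i+1) M, x i * x j)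
          + (∑ i ∈ Icc 1 M, x i) * x (M+1) := by
      rw [Finset.sum_Icc_succ_top (by omega : (1:ℕ) ≤ M + 1)]
      have h1 : ∀ i ∈ Icc 1 M, ∑ j ∈ Icc (i+1) (M+1), x i * x j
          = (∑ j ∈ Icc (i+1) M, x i * x j) + x i * x (M+1) := by
        intro i hi
        simp only [Finset.mem_Icc] at hi
        exact Finset.sum_Icc_succ_top (by omega) _
      rw [Finset.sum_congr rfl h1, Finset.sum_add_distrib, ← Finset.sum_mul]
      have h2 : Icc (M+1+1) (M+1) = (∅ : Finset ℕ) := Finset.Icc_eq_empty (by omega)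
      rw [h2]
      simp
    rw [hA, hQ, hD]
    linear_combination ih

set_option maxHeartbeats 1600000 in
/-- **Theorem 2 (lower bound).** For an even positive integer `m` and nonincreasing
nonnegative Schmidt coefficients `c 1 ≥ ⋯ ≥ c m ≥ 0` with `∑ cᵢ² = 1`, setting
`K = 2 ∑_{j=1}^{m/2} c_{2j-1} c_{2j}`, the Bell value `B = 2√(1 + K²)` and the
concurrence `C = 2√(∑_{i<j} cᵢ² cⱼ²)` satisfy `B ≥ √(2(1 + C²))`. -/
theorem bell_lower_bound_even (m : ℕ) (hm : Even m) (hm0 : 0 < m)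
    (c : ℕ → ℝ)
    (hnonneg : ∀ i, 1 ≤ i → i ≤ m → 0 ≤ c i)
    (hmono : ∀ i, 1 ≤ i → i < m → c (i + 1) ≤ c i)
    (hnorm : ∑ i ∈ Finset.Icc 1 m, (c i) ^ 2 = 1)
    (K B C : ℝ)
    (hK : K = 2 * ∑ j ∈ Finset.Icc 1 (m / 2), c (2 * j - 1) * c (2 * j))
    (hB : B = 2 * Real.sqrt (1 + K ^ 2))
    (hC : C = 2 * Real.sqrt (∑ i ∈ Finset.Icc 1 m,
      ∑ j ∈ Finset.Icc (i + 1) m, (c i) ^ 2 * (c j) ^ 2)) :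
    B ≥ Real.sqrt (2 * (1 + C ^ 2)) := by
  obtain ⟨n, hn⟩ := hm
  have hmn : m = 2 * n := by omega
  have hn1 : 1 ≤ n := by omega
  set Qs : ℝ := ∑ i ∈ Finset.Icc 1 m, ((c i)^2)^2 with hQs
  set Ss : ℝ := ∑ i ∈ Finset.Icc 1 m, ∑ j ∈ Finset.Icc (i + 1) m, (c i) ^ 2 * (c j) ^ 2 with hSs
  have hexp : (1:ℝ) = Qs + 2 * Ss := by
    have h := sq_expand' (fun i => (c i)^2) m
    rw [hnorm, one_pow] at h
    rw [hQs, hSs]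
    exact h
  have hSge : 0 ≤ Ss := by
    apply Finset.sum_nonneg
    intro i _
    apply Finset.sum_nonneg
    intro j _
    positivity
  have hC2 : C^2 = 4 * Ss := by
    rw [hC, mul_pow, Real.sq_sqrt hSge]
    ring
  have hB0 : 0 ≤ B := by rw [hB]; positivity
  have hB2 : B^2 = 4 * (1 + K^2) := by
    rw [hB, mul_pow, Real.sq_sqrt (by positivity)]
    ring
  -- key inequality : 1/2 ≤ K^2 + Qs
  have hm2 : m / 2 = n := by omega
  rw [hm2] at hK
  -- nonnegativity of pair products
  have hpnn : ∀ t ∈ Icc 1 n, 0 ≤ c (2*t-1) * c (2*t) := by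
    intro t ht
    simp only [Finset.mem_Icc] at ht
    exact mul_nonneg (hnonneg _ (by omega) (by omega)) (hnonneg _ (by omega) (by omega))
  have hkey : (1:ℝ)/2 ≤ K^2 + Qs := by
    rcases eq_or_lt_of_le hn1 with h1 | h2
    · -- n = 1, m = 2
      subst h1
      have hm2' : m = 2 := by omega
      subst hm2'
      have hIcc2 : (Finset.Icc 1 2 : Finset ℕ) = {1, 2} := by decide
      have hIcc1 : (Finset.Icc 1 1 : Finset ℕ) = {1} := by decide
      rw [hIcc2, Finset.sum_pair (by norm_num : (1:ℕ) ≠ 2)] at hnorm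
      have hKv : K = 2 * (c 1 * c 2) := by
        rw [hK, hIcc1, Finset.sum_singleton]
      have hQv : Qs = ((c 1)^2)^2 + ((c 2)^2)^2 := by
        rw [hQs, hIcc2, Finset.sum_pair (by norm_num : (1:ℕ) ≠ 2)]
      rw [hKv, hQv]
      have hid : (2*(c 1 * c 2))^2 + (((c 1)^2)^2 + ((c 2)^2)^2)
          = (1/2)*(((c 1)^2+(c 2)^2)^2) + 4*((c 1)*(c 2))^2
            + (1/2)*(((c 1)^2-(c 2)^2)^2) := by ring
      have h1sq : (((c 1)^2+(c 2)^2)^2 : ℝ) = 1 := by rw [hnorm]; norm_num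
      linarith [hid, h1sq, sq_nonneg ((c 1)*(c 2)), sq_nonneg ((c 1)^2-(c 2)^2)]
    · -- n ≥ 2, m ≥ 4
      have hn2 : 2 ≤ n := h2
      have hm4 : 4 ≤ m := by omega
      have hab : (c 2) ≤ (c 1) := hmono 1 le_rfl (by omega)
      have hbx : (c 3) ≤ (c 2) := hmono 2 (by omega) (by omega)
      have hxy : (c 4) ≤ (c 3) := hmono 3 (by omega) (by omega)
      have hy0 : 0 ≤ (c 4) := hnonneg 4 (by omega) (by omega)
      have hx0 : 0 ≤ (c 3) := le_trans hy0 hxy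
      have hb0 : 0 ≤ (c 2) := le_trans hx0 hbx
      have ha0 : 0 ≤ (c 1) := le_trans hb0 hab
      set u : ℝ := ∑ t ∈ Icc 3 n, ((c (2*t-1))^2 + (c (2*t))^2) with hu
      have hu0 : 0 ≤ u := by
        apply Finset.sum_nonneg
        intro t _
        positivity
      -- split the norm sum into pairs
      have hps : ∑ i ∈ Icc 1 m, (c i)^2
          = ∑ t ∈ Icc 1 n, ((c (2*t-1))^2 + (c (2*t))^2) := by
        rw [hmn]; exact pair_sum' (fun i => (c i)^2) n
      have hsplit : (c 1)^2 + (c 2)^2 + ((c 3)^2 + (c 4)^2) + u = 1 := by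
        have e1 : (Icc 1 n : Finset ℕ) = Ioc 0 n := by
          rw [← Finset.Icc_add_one_left_eq_Ioc]; rfl
        have e2 : (Icc 3 n : Finset ℕ) = Ioc 2 n := by
          rw [← Finset.Icc_add_one_left_eq_Ioc]; rfl
        have e3 : (∑ t ∈ Ioc 0 2, ((c (2*t-1))^2 + (c (2*t))^2))
            + (∑ t ∈ Ioc 2 n, ((c (2*t-1))^2 + (c (2*t))^2))
            = ∑ t ∈ Ioc 0 n, ((c (2*t-1))^2 + (c (2*t))^2) :=
          Finset.sum_Ioc_consecutive _ (by omega) (by omega)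
        have e4 : (Ioc 0 2 : Finset ℕ) = {1, 2} := by decide
        have e5 : ∑ t ∈ Ioc 0 2, ((c (2*t-1))^2 + (c (2*t))^2)
            = (c 1)^2 + (c 2)^2 + ((c 3)^2 + (c 4)^2) := by
          rw [e4]
          norm_num [Finset.sum_insert, Finset.sum_singleton]
        have := hnorm
        rw [hps, e1, ← e3, e5, ← e2, ← hu] at this
        linarith
      -- lower bound for K
      have hKlb : 2*((c 1)*(c 2)) + u ≤ K := by
        have e1 : (Icc 1 n : Finset ℕ) = Ioc 0 n := by rw [← Finset.Icc_add_one_left_eq_Ioc]; rfl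
        have e3 : (∑ t ∈ Ioc 0 1, c (2*t-1) * c (2*t))
            + (∑ t ∈ Ioc 1 n, c (2*t-1) * c (2*t))
            = ∑ t ∈ Ioc 0 n, c (2*t-1) * c (2*t) :=
          Finset.sum_Ioc_consecutive _ (by omega) (by omega)
        have e4 : (Ioc 0 1 : Finset ℕ) = {1} := by decide
        have e5 : ∑ t ∈ Ioc 0 1, c (2*t-1) * c (2*t) = (c 1) * (c 2) := by
          rw [e4]; norm_num
        -- u ≤ 2 * tail sum
        have etail : u ≤ 2 * ∑ t ∈ Ioc 1 n, c (2*t-1) * c (2*t) := by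
          have r1 : (Icc 3 n : Finset ℕ) = Ico 3 (n+1) := by
            rw [Finset.Ico_add_one_right_eq_Icc]
          have r2 : (Ioc 1 n : Finset ℕ) = Ico 2 (n+1) := by
            rw [Finset.Ico_add_one_right_eq_Icc, ← Finset.Icc_add_one_left_eq_Ioc]; rfl
          rw [hu, r1, r2, Finset.sum_Ico_eq_sum_range, Finset.sum_Ico_eq_sum_range]
          have hcard1 : n + 1 - 3 = n - 2 := by omega
          have hcard2 : n + 1 - 2 = n - 1 := by omega
          rw [hcard1, hcard2, Finset.mul_sum]
          calc ∑ i ∈ range (n-2), ((c (2*(3+i)-1))^2 + (c (2*(3+i)))^2)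
              ≤ ∑ i ∈ range (n-2), 2 * (c (2*(2+i)-1) * c (2*(2+i))) := by
                apply Finset.sum_le_sum
                intro i hi
                simp only [Finset.mem_range] at hi
                have i1 : 2*(3+i)-1 = 2*i+5 := by omega
                have i2 : 2*(3+i) = 2*i+6 := by omega
                have i3 : 2*(2+i)-1 = 2*i+3 := by omega
                have i4 : 2*(2+i) = 2*i+4 := by omega
                rw [i1, i2, i3, i4]
                have m1 : c (2*i+4) ≤ c (2*i+3) := hmono _ (by omega) (by omega)
                have m2 : c (2*i+5) ≤ c (2*i+4) := hmono _ (by omega) (by omega)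
                have m3 : c (2*i+6) ≤ c (2*i+5) := hmono _ (by omega) (by omega)
                have n6 : 0 ≤ c (2*i+6) := hnonneg _ (by omega) (by omega)
                have n5 : 0 ≤ c (2*i+5) := le_trans n6 m3
                have n4 : 0 ≤ c (2*i+4) := le_trans n5 m2
                nlinarith [m1, m2, m3, n4, n5, n6]
            _ ≤ ∑ i ∈ range (n-1), 2 * (c (2*(2+i)-1) * c (2*(2+i))) := by
                apply Finset.sum_le_sum_of_subset_of_nonneg
                · exact Finset.range_subset_range.2 (by omega)
                · intro i hi _
                  simp only [Finset.mem_range] at hi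
                  have i3 : 2*(2+i)-1 = 2*i+3 := by omega
                  have i4 : 2*(2+i) = 2*i+4 := by omega
                  rw [i3, i4]
                  have n4 : 0 ≤ c (2*i+4) := hnonneg _ (by omega) (by omega)
                  have n3 : 0 ≤ c (2*i+3) := hnonneg _ (by omega) (by omega)
                  positivity
        rw [hK, e1, ← e3, e5]
        linarith
      -- lower bound for Qs
      have hQlb : ((c 1)^2)^2 + ((c 2)^2)^2 + ((c 3)^2)^2 + ((c 4)^2)^2 ≤ Qs := by
        have hsub : (Icc 1 4 : Finset ℕ) ⊆ Icc 1 m := by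
          intro i hi
          simp only [Finset.mem_Icc] at *
          omega
        have h4 : ∑ i ∈ Icc 1 4, ((c i)^2)^2 = ((c 1)^2)^2 + ((c 2)^2)^2 + ((c 3)^2)^2 + ((c 4)^2)^2 := by
          have : (Icc 1 4 : Finset ℕ) = {1, 2, 3, 4} := by decide
          rw [this]
          norm_num
          ring
        rw [hQs, ← h4]
        apply Finset.sum_le_sum_of_subset_of_nonneg hsub
        intro i _ _
        positivity
      have hK0 : 0 ≤ K := by nlinarith [hKlb, hu0, mul_nonneg ha0 hb0]
      have hKsq : (2*((c 1)*(c 2)) + u)^2 ≤ K^2 := by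
        have h0 : 0 ≤ 2*((c 1)*(c 2)) + u := by positivity
        exact pow_le_pow_left₀ h0 hKlb 2
      have hs2ab : (c 3)^2 + (c 4)^2 ≤ 2*((c 1)*(c 2)) := by nlinarith [hbx, hxy, hy0, hx0, hb0, hab]
      have h1sq : ((c 1)^2 + (c 2)^2 + ((c 3)^2 + (c 4)^2) + u)^2 = 1 := by
        rw [hsplit]; norm_num
      have key3 : (1:ℝ)/2 ≤ (2*((c 1)*(c 2)) + u)^2
          + (((c 1)^2)^2 + ((c 2)^2)^2 + ((c 3)^2)^2 + ((c 4)^2)^2) := by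
        have hid : (2*((c 1)*(c 2)) + u)^2
            + (((c 1)^2)^2 + ((c 2)^2)^2 + ((c 3)^2)^2 + ((c 4)^2)^2)
            = (1/2)*(((c 1)^2 + (c 2)^2 + ((c 3)^2 + (c 4)^2) + u)^2)
              + (1/2)*((((c 1)-(c 2))^2 - u)^2)
              + (2*((c 1)*(c 2)) - ((c 3)^2+(c 4)^2)) * ((c 1)^2 + (c 2)^2 + u)
              + (1/2)*(((c 3)^2 - (c 4)^2)^2) := by ring
        have hp2 : (0:ℝ) ≤ (2*((c 1)*(c 2)) - ((c 3)^2+(c 4)^2)) * ((c 1)^2 + (c 2)^2 + u) :=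
          mul_nonneg (by linarith) (by positivity)
        linarith [hid, h1sq, sq_nonneg (((c 1)-(c 2))^2 - u), sq_nonneg ((c 3)^2 - (c 4)^2), hp2]
      linarith [hKsq, hQlb, key3]
  -- conclude
  have htarget : 2 * (1 + C^2) ≤ B^2 := by
    rw [hC2, hB2]
    linarith [hexp, hkey]
  calc Real.sqrt (2 * (1 + C ^ 2)) ≤ Real.sqrt (B^2) := Real.sqrt_le_sqrt htarget
    _ = B := Real.sqrt_sq hB0
end

section
/- Let m be an even positive integer and let c_1 ≥ c_2 ≥ ... ≥ c_m ≥ 0 be real numbers with ∑_{i=1}^m c_i^2 = 1. Then 1 + 8·(∑_{j=1}^{m/2} c_{2j-1}c_{2j})^2 ≥ 2·∑_{i ≠ j} c_i^2 c_j^2, where the right-hand sum is over all ordered pairs (i, j) with 1 ≤ i, j ≤ m and i ≠ j. -/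
lemma offDiag_sum_sq (s : Finset ℕ) (f : ℕ → ℝ) :
    ∑ p ∈ s.offDiag, f p.1 * f p.2 = (∑ i ∈ s, f i) ^ 2 - ∑ i ∈ s, (f i) ^ 2 := by
  have h1 : ∑ p ∈ s ×ˢ s, f p.1 * f p.2 = (∑ i ∈ s, f i) ^ 2 := by
    rw [Finset.sum_product, sq, Finset.sum_mul_sum]
  rw [← Finset.diag_union_offDiag s,
    Finset.sum_union (Finset.disjoint_diag_offDiag s), Finset.sum_diag] at h1
  have : ∀ i ∈ s, f i * f i = (f i)^2 := fun i _ => (sq (f i)).symm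
  rw [Finset.sum_congr rfl this] at h1
  linarith

lemma pair_sum_lower (m : ℕ) (c : ℕ → ℝ)
    (hnonneg : ∀ i, 1 ≤ i → i ≤ m → 0 ≤ c i)
    (hmono : ∀ i, 1 ≤ i → i < m → c (i + 1) ≤ c i) :
    ∀ n, 2 * n + 1 ≤ m →
      ∑ i ∈ Finset.Icc 2 (2 * n + 1), (c i) ^ 2 ≤
        ∑ j ∈ Finset.Icc 1 n, 2 * (c (2 * j - 1) * c (2 * j)) := by
  intro n
  induction n with
  | zero => simp
  | succ n ih =>
    intro hle
    have hle' : 2 * n + 1 ≤ m := by omega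
    have e1 : Finset.Icc 1 (n + 1) = insert (n + 1) (Finset.Icc 1 n) := by
      ext x; simp [Finset.mem_Icc, Finset.mem_insert]; omega
    have e2 : Finset.Icc 2 (2 * (n + 1) + 1) =
        insert (2 * n + 3) (insert (2 * n + 2) (Finset.Icc 2 (2 * n + 1))) := by
      ext x; simp [Finset.mem_Icc, Finset.mem_insert]; omega
    rw [e1, e2, Finset.sum_insert (by simp), Finset.sum_insert (by simp),
      Finset.sum_insert (by simp)]
    have h1 : c (2 * n + 2) ≤ c (2 * n + 1) := hmono _ (by omega) (by omega)
    have h2 : c (2 * n + 3) ≤ c (2 * n + 2) := hmono _ (by omega) (by omega)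
    have h3 : 0 ≤ c (2 * n + 2) := hnonneg _ (by omega) (by omega)
    have h4 : 0 ≤ c (2 * n + 3) := hnonneg _ (by omega) (by omega)
    have key : (c (2 * n + 3)) ^ 2 + (c (2 * n + 2)) ^ 2 ≤
        2 * (c (2 * (n + 1) - 1) * c (2 * (n + 1))) := by
      have : 2 * (n + 1) - 1 = 2 * n + 1 := by omega
      rw [this, show 2 * (n + 1) = 2 * n + 2 from by ring]
      nlinarith [mul_nonneg h3 h4]
    linarith [ih hle']

/-- **Key inequality `1 + 2K² ≥ C²`.** For an even positive integer `m` and nonincreasing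
nonnegative reals `c 1 ≥ ⋯ ≥ c m ≥ 0` with `∑ cᵢ² = 1`:
`1 + 8 (∑_{j=1}^{m/2} c_{2j-1} c_{2j})² ≥ 2 ∑_{i ≠ j} cᵢ² cⱼ²`, the right-hand sum
running over ordered pairs `(i, j)` with `1 ≤ i, j ≤ m` and `i ≠ j`. -/
theorem one_add_two_K_sq_ge_C_sq (m : ℕ) (hm : Even m) (hm0 : 0 < m)
    (c : ℕ → ℝ)
    (hnonneg : ∀ i, 1 ≤ i → i ≤ m → 0 ≤ c i)
    (hmono : ∀ i, 1 ≤ i → i < m → c (i + 1) ≤ c i)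
    (hnorm : ∑ i ∈ Finset.Icc 1 m, (c i) ^ 2 = 1) :
    1 + 8 * (∑ j ∈ Finset.Icc 1 (m / 2), c (2 * j - 1) * c (2 * j)) ^ 2 ≥
      2 * ∑ p ∈ (Finset.Icc 1 m).offDiag, (c p.1) ^ 2 * (c p.2) ^ 2 := by

  obtain ⟨n, rfl⟩ : ∃ n, m = 2 * n := hm.exists_two_nsmul _ |>.imp fun n h => by
    simpa [two_nsmul, two_mul] using h
  have hn : 1 ≤ n := by omega
  have hdiv : 2 * n / 2 = n := by omega
  rw [hdiv]
  set K : ℝ := ∑ j ∈ Finset.Icc 1 n, c (2 * j - 1) * c (2 * j) with hK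
  -- K nonneg
  have hKnn : 0 ≤ K := Finset.sum_nonneg fun j hj => by
    simp only [Finset.mem_Icc] at hj
    exact mul_nonneg (hnonneg _ (by omega) (by omega)) (hnonneg _ (by omega) (by omega))
  -- split off the first term of the norm sum
  have hsplit : Finset.Icc 1 (2 * n) = insert 1 (Finset.Icc 2 (2 * n)) := by
    ext x; simp [Finset.mem_Icc, Finset.mem_insert]; omega
  have hnorm' : (c 1) ^ 2 + ∑ i ∈ Finset.Icc 2 (2 * n), (c i) ^ 2 = 1 := by
    rw [← hnorm, hsplit, Finset.sum_insert (by simp)]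
  -- 2K ≥ 1 - c1²
  have hKlow : 1 - (c 1) ^ 2 ≤ 2 * K := by
    have e1 : Finset.Icc 1 n = insert n (Finset.Icc 1 (n - 1)) := by
      ext x; simp [Finset.mem_Icc, Finset.mem_insert]; omega
    have e2 : Finset.Icc 2 (2 * n) = insert (2 * n) (Finset.Icc 2 (2 * (n - 1) + 1)) := by
      ext x; simp [Finset.mem_Icc, Finset.mem_insert]; omega
    have hrec := pair_sum_lower (2 * n) c hnonneg hmono (n - 1) (by omega)
    have hlast : (c (2 * n)) ^ 2 ≤ 2 * (c (2 * n - 1) * c (2 * n)) := by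
      have h1 : c (2 * n) ≤ c (2 * n - 1) := by
        have := hmono (2 * n - 1) (by omega) (by omega)
        rwa [show 2 * n - 1 + 1 = 2 * n from by omega] at this
      have h2 : 0 ≤ c (2 * n) := hnonneg _ (by omega) (by omega)
      nlinarith
    have hKsum : 2 * K = ∑ j ∈ Finset.Icc 1 n, 2 * (c (2 * j - 1) * c (2 * j)) := by
      rw [hK, Finset.mul_sum]
    rw [hKsum, e1, Finset.sum_insert (by simp; omega)]
    have := hnorm'
    rw [e2, Finset.sum_insert (by simp; omega)] at this
    have hnm1 : 2 * (n - 1) = 2 * n - 2 := by omega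
    calc 1 - (c 1) ^ 2 = (c (2 * n)) ^ 2 + ∑ i ∈ Finset.Icc 2 (2 * (n - 1) + 1), (c i) ^ 2 := by
          linarith
      _ ≤ 2 * (c (2 * n - 1) * c (2 * n)) +
            ∑ j ∈ Finset.Icc 1 (n - 1), 2 * (c (2 * j - 1) * c (2 * j)) := by
          exact add_le_add hlast hrec
  -- c1² ≤ 1
  have hc1 : (c 1) ^ 2 ≤ 1 := by
    have : 0 ≤ ∑ i ∈ Finset.Icc 2 (2 * n), (c i) ^ 2 :=
      Finset.sum_nonneg fun i _ => sq_nonneg _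
    linarith
  -- sum of fourth powers ≥ c1⁴
  have hc4 : (c 1) ^ 4 ≤ ∑ i ∈ Finset.Icc 1 (2 * n), ((c i) ^ 2) ^ 2 := by
    have := Finset.single_le_sum (f := fun i => ((c i) ^ 2) ^ 2) (s := Finset.Icc 1 (2 * n))
      (fun i _ => sq_nonneg _) (Finset.mem_Icc.mpr ⟨le_refl 1, by omega⟩)
    calc (c 1) ^ 4 = ((c 1) ^ 2) ^ 2 := by ring
      _ ≤ _ := this
  -- rewrite the offDiag sum
  rw [offDiag_sum_sq (Finset.Icc 1 (2 * n)) (fun i => (c i) ^ 2)]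
  simp only [hnorm]
  nlinarith [sq_nonneg (2 * K - (1 - (c 1)^2)), sq_nonneg (2 * (c 1)^2 - 1), sq_nonneg K]
end
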